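/- Let (a_j)_{j=0}^{n−1} be real numbers and consider P_{i,k} = ∏_{j=i+1}^{k−1}(1 + a_j) and E_{i,k} = exp(∑_{j=i}^{k−1} a_j). If |a_j| ≤ c/n for all j with a constant c > 0, then sup_{0 ≤ i < k ≤ n} |P_{i,k} − E_{i,k}| ≤ C(c)/n for a constant C(c) depending only on c. -/

import Mathlib

open Finset

lemma key_prod_sub (B : ℝ) (hB : 1 ≤ B) (f g : ℕ → ℝ) (s : Finset ℕ)
    (hf : ∀ j ∈ s, |f j| ≤ B) (hg : ∀ j ∈ s, |g j| ≤ B) :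
    |∏ j ∈ s, f j - ∏ j ∈ s, g j| ≤ (∑ j ∈ s, |f j - g j|) * B ^ s.card := by
  induction s using Finset.induction_on with
  | empty => simp
  | @insert a s' ha ih =>
    rw [Finset.prod_insert ha, Finset.prod_insert ha, Finset.sum_insert ha,
      Finset.card_insert_of_notMem ha]
    have hB0 : (0:ℝ) ≤ B := le_trans zero_le_one hB
    have hfa : |f a| ≤ B := hf a (Finset.mem_insert_self a s')
    have hga : |g a| ≤ B := hg a (Finset.mem_insert_self a s')
    have ih' := ih (fun j hj => hf j (Finset.mem_insert_of_mem hj))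
      (fun j hj => hg j (Finset.mem_insert_of_mem hj))
    have hQ : |∏ j ∈ s', g j| ≤ B ^ s'.card := by
      rw [Finset.abs_prod]
      calc ∏ j ∈ s', |g j| ≤ ∏ j ∈ s', B :=
            Finset.prod_le_prod (fun j _ => abs_nonneg _)
              (fun j hj => hg j (Finset.mem_insert_of_mem hj))
        _ = B ^ s'.card := by rw [Finset.prod_const]
    have key : f a * ∏ j ∈ s', f j - g a * ∏ j ∈ s', g j
        = f a * (∏ j ∈ s', f j - ∏ j ∈ s', g j) + (f a - g a) * ∏ j ∈ s', g j := by
      ring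
    rw [key]
    have h1 : |f a * (∏ j ∈ s', f j - ∏ j ∈ s', g j) + (f a - g a) * ∏ j ∈ s', g j|
        ≤ |f a| * |∏ j ∈ s', f j - ∏ j ∈ s', g j| + |f a - g a| * |∏ j ∈ s', g j| := by
      calc _ ≤ |f a * (∏ j ∈ s', f j - ∏ j ∈ s', g j)| + |(f a - g a) * ∏ j ∈ s', g j| :=
            abs_add_le _ _
        _ = _ := by rw [abs_mul, abs_mul]
    refine h1.trans ?_
    have hsum0 : (0:ℝ) ≤ ∑ j ∈ s', |f j - g j| :=
      Finset.sum_nonneg (fun j _ => abs_nonneg _)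
    have hpow : B ^ s'.card ≤ B ^ (s'.card + 1) := pow_le_pow_right₀ hB (by omega)
    have t1 : |f a| * |∏ j ∈ s', f j - ∏ j ∈ s', g j|
        ≤ (∑ j ∈ s', |f j - g j|) * B ^ (s'.card + 1) := by
      calc |f a| * |∏ j ∈ s', f j - ∏ j ∈ s', g j|
          ≤ B * ((∑ j ∈ s', |f j - g j|) * B ^ s'.card) :=
            mul_le_mul hfa ih' (abs_nonneg _) hB0
        _ = (∑ j ∈ s', |f j - g j|) * B ^ (s'.card + 1) := by ring
    have t2 : |f a - g a| * |∏ j ∈ s', g j| ≤ |f a - g a| * B ^ (s'.card + 1) :=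
      mul_le_mul_of_nonneg_left (hQ.trans hpow) (abs_nonneg _)
    nlinarith [abs_nonneg (f a - g a)]

theorem stmt_15 (c : ℝ) (hc : 0 < c) :
    ∃ C : ℝ, ∀ (n : ℕ), 1 ≤ n → ∀ a : ℕ → ℝ, (∀ j < n, |a j| ≤ c / n) →
      ∀ i k : ℕ, i < k → k ≤ n →
        |(∏ j ∈ Finset.Ico (i + 1) k, (1 + a j)) -
          Real.exp (∑ j ∈ Finset.Ico i k, a j)| ≤ C / n := by
  refine ⟨(c^2 + 2*c) * Real.exp c + 2*c*Real.exp (2*c), ?_⟩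
  intro n hn a ha i k hik hkn
  have hn0 : (0:ℝ) < n := by exact_mod_cast hn
  have hcn : 0 < c / n := div_pos hc hn0
  -- bounds on individual terms
  have hmem : ∀ j ∈ Finset.Ico (i+1) k, j < n := fun j hj => by
    have := (Finset.mem_Ico.mp hj).2; omega
  have hBf : ∀ j ∈ Finset.Ico (i+1) k, |1 + a j| ≤ Real.exp (c / n) := by
    intro j hj
    calc |1 + a j| ≤ 1 + |a j| := by
          have := abs_add_le (1:ℝ) (a j); simpa using this
      _ ≤ 1 + c / n := by linarith [ha j (hmem j hj)]
      _ ≤ Real.exp (c / n) := by linarith [Real.add_one_le_exp (c / n)]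
  have hBg : ∀ j ∈ Finset.Ico (i+1) k, |Real.exp (a j)| ≤ Real.exp (c / n) := by
    intro j hj
    rw [abs_of_pos (Real.exp_pos _)]
    exact Real.exp_le_exp.mpr ((le_abs_self _).trans (ha j (hmem j hj)))
  have hcard : (Finset.Ico (i+1) k).card ≤ n := by
    rw [Nat.card_Ico]; omega
  have hpow : Real.exp (c / n) ^ (Finset.Ico (i+1) k).card ≤ Real.exp c := by
    rw [← Real.exp_nat_mul]
    apply Real.exp_le_exp.mpr
    calc ((Finset.Ico (i+1) k).card : ℝ) * (c / n) ≤ n * (c / n) := by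
          apply mul_le_mul_of_nonneg_right _ hcn.le
          exact_mod_cast hcard
      _ = c := by field_simp
  -- bound the product and the exponential separately (trivial bound)
  have hprodbound : |∏ j ∈ Finset.Ico (i+1) k, (1 + a j)| ≤ Real.exp c := by
    rw [Finset.abs_prod]
    calc ∏ j ∈ Finset.Ico (i+1) k, |1 + a j|
        ≤ ∏ j ∈ Finset.Ico (i+1) k, Real.exp (c / n) :=
          Finset.prod_le_prod (fun j _ => abs_nonneg _) hBf
      _ = Real.exp (c / n) ^ (Finset.Ico (i+1) k).card := Finset.prod_const _
      _ ≤ Real.exp c := hpow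
  have hsumk : ∑ j ∈ Finset.Ico i k, a j ≤ c := by
    calc ∑ j ∈ Finset.Ico i k, a j ≤ ∑ j ∈ Finset.Ico i k, (c / n) := by
          apply Finset.sum_le_sum
          intro j hj
          have hjn : j < n := by have := (Finset.mem_Ico.mp hj).2; omega
          exact (le_abs_self _).trans (ha j hjn)
      _ = (Finset.Ico i k).card * (c / n) := by rw [Finset.sum_const, nsmul_eq_mul]
      _ ≤ n * (c / n) := by
          apply mul_le_mul_of_nonneg_right _ hcn.le
          have : (Finset.Ico i k).card ≤ n := by rw [Nat.card_Ico]; omega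
          exact_mod_cast this
      _ = c := by field_simp
  have hexpbound : |Real.exp (∑ j ∈ Finset.Ico i k, a j)| ≤ Real.exp c := by
    rw [abs_of_pos (Real.exp_pos _)]
    exact Real.exp_le_exp.mpr hsumk
  have hC0 : (0:ℝ) ≤ (c^2 + 2*c) * Real.exp c := by positivity
  by_cases hbig : (n : ℝ) ≤ c
  · -- trivial bound: |P - E| ≤ 2 exp c ≤ C / n
    have h1 : |(∏ j ∈ Finset.Ico (i + 1) k, (1 + a j)) -
        Real.exp (∑ j ∈ Finset.Ico i k, a j)| ≤ 2 * Real.exp c := by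
      calc _ ≤ |∏ j ∈ Finset.Ico (i + 1) k, (1 + a j)| +
            |Real.exp (∑ j ∈ Finset.Ico i k, a j)| := abs_sub _ _
        _ ≤ 2 * Real.exp c := by linarith
    refine h1.trans ?_
    rw [le_div_iff₀ hn0]
    have hec : Real.exp c ≤ Real.exp (2*c) := Real.exp_le_exp.mpr (by linarith)
    have : 2 * Real.exp c * n ≤ 2 * c * Real.exp (2*c) := by
      have h2 : Real.exp c * n ≤ Real.exp (2*c) * c := by
        apply mul_le_mul hec hbig hn0.le (Real.exp_pos _).le
      nlinarith
    nlinarith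
  · -- main case: c / n ≤ 1
    push_neg at hbig
    have hcn1 : c / n ≤ 1 := by
      rw [div_le_one hn0]; linarith
    -- split the sum: Ico i k = insert i (Ico (i+1) k)
    have hsplit : ∑ j ∈ Finset.Ico i k, a j = a i + ∑ j ∈ Finset.Ico (i+1) k, a j :=
      Finset.sum_eq_sum_Ico_succ_bot hik a
    have hexpprod : Real.exp (∑ j ∈ Finset.Ico (i+1) k, a j)
        = ∏ j ∈ Finset.Ico (i+1) k, Real.exp (a j) := (Real.exp_sum _ _)
    -- term 1: product vs product of exponentials
    have hterm1 : |(∏ j ∈ Finset.Ico (i + 1) k, (1 + a j)) -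
        ∏ j ∈ Finset.Ico (i+1) k, Real.exp (a j)| ≤ c^2 * Real.exp c / n := by
      have := key_prod_sub (Real.exp (c/n)) (by
          have := Real.add_one_le_exp (c/n); linarith)
        (fun j => 1 + a j) (fun j => Real.exp (a j)) (Finset.Ico (i+1) k) hBf hBg
      refine this.trans ?_
      have hsum : ∑ j ∈ Finset.Ico (i+1) k, |(1 + a j) - Real.exp (a j)| ≤ c^2 / n := by
        calc ∑ j ∈ Finset.Ico (i+1) k, |(1 + a j) - Real.exp (a j)|
            ≤ ∑ j ∈ Finset.Ico (i+1) k, (c/n)^2 := by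
              apply Finset.sum_le_sum
              intro j hj
              have haj : |a j| ≤ c / n := ha j (hmem j hj)
              have haj1 : |a j| ≤ 1 := haj.trans hcn1
              have := Real.abs_exp_sub_one_sub_id_le haj1
              have heq : |(1 + a j) - Real.exp (a j)| = |Real.exp (a j) - 1 - a j| := by
                rw [← abs_neg]; ring_nf
              rw [heq]
              calc |Real.exp (a j) - 1 - a j| ≤ a j ^ 2 := this
                _ = |a j|^2 := (sq_abs _).symm
                _ ≤ (c/n)^2 := by nlinarith [abs_nonneg (a j)]
          _ = (Finset.Ico (i+1) k).card * (c/n)^2 := by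
              rw [Finset.sum_const, nsmul_eq_mul]
          _ ≤ n * (c/n)^2 := by
              apply mul_le_mul_of_nonneg_right _ (by positivity)
              exact_mod_cast hcard
          _ = c^2 / n := by field_simp
      calc (∑ j ∈ Finset.Ico (i+1) k, |(1 + a j) - Real.exp (a j)|) *
            Real.exp (c/n) ^ (Finset.Ico (i+1) k).card
          ≤ (c^2 / n) * Real.exp c := by
            apply mul_le_mul hsum hpow (by positivity)
              (by positivity)
        _ = c^2 * Real.exp c / n := by ring
    -- term 2: extra factor exp(a i)
    have hain : |a i| ≤ c / n := ha i (by omega)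
    have hterm2 : |(∏ j ∈ Finset.Ico (i+1) k, Real.exp (a j)) -
        Real.exp (∑ j ∈ Finset.Ico i k, a j)| ≤ 2 * c * Real.exp c / n := by
      rw [hsplit, Real.exp_add, ← hexpprod]
      have : Real.exp (∑ j ∈ Finset.Ico (i+1) k, a j) -
          Real.exp (a i) * Real.exp (∑ j ∈ Finset.Ico (i+1) k, a j)
          = (1 - Real.exp (a i)) * Real.exp (∑ j ∈ Finset.Ico (i+1) k, a j) := by ring
      rw [this, abs_mul]
      have h1 : |1 - Real.exp (a i)| ≤ 2 * (c / n) := by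
        rw [abs_sub_comm]
        calc |Real.exp (a i) - 1| ≤ 2 * |a i| :=
              Real.abs_exp_sub_one_le (hain.trans hcn1)
          _ ≤ 2 * (c / n) := by linarith
      have h2 : |Real.exp (∑ j ∈ Finset.Ico (i+1) k, a j)| ≤ Real.exp c := by
        rw [abs_of_pos (Real.exp_pos _)]
        apply Real.exp_le_exp.mpr
        calc ∑ j ∈ Finset.Ico (i+1) k, a j ≤ ∑ j ∈ Finset.Ico (i+1) k, (c / n) := by
              apply Finset.sum_le_sum
              intro j hj
              exact (le_abs_self _).trans (ha j (hmem j hj))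
          _ = (Finset.Ico (i+1) k).card * (c / n) := by
              rw [Finset.sum_const, nsmul_eq_mul]
          _ ≤ n * (c / n) := by
              apply mul_le_mul_of_nonneg_right _ hcn.le
              exact_mod_cast hcard
          _ = c := by field_simp
      calc |1 - Real.exp (a i)| * |Real.exp (∑ j ∈ Finset.Ico (i+1) k, a j)|
          ≤ (2 * (c/n)) * Real.exp c := by
            apply mul_le_mul h1 h2 (abs_nonneg _) (by positivity)
        _ = 2 * c * Real.exp c / n := by ring
    have htri : |(∏ j ∈ Finset.Ico (i + 1) k, (1 + a j)) -
        Real.exp (∑ j ∈ Finset.Ico i k, a j)|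
        ≤ c^2 * Real.exp c / n + 2 * c * Real.exp c / n := by
      calc _ ≤ |(∏ j ∈ Finset.Ico (i + 1) k, (1 + a j)) -
              ∏ j ∈ Finset.Ico (i+1) k, Real.exp (a j)| +
              |(∏ j ∈ Finset.Ico (i+1) k, Real.exp (a j)) -
              Real.exp (∑ j ∈ Finset.Ico i k, a j)| := abs_sub_le _ _ _
        _ ≤ _ := by linarith
    refine htri.trans ?_
    rw [← add_div, div_le_div_iff₀ hn0 hn0]
    have h2c : (0:ℝ) < Real.exp (2*c) := Real.exp_pos _
    nlinarith [Real.exp_pos c, mul_pos hc h2c, hn0]
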